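/- arXiv:2507.02251 — 3 statements merged into one kernel-verified Lean document; each statement's English description precedes it below -/
import Mathlib

section
/- Let H be a complex Hilbert space, let z₁, z₂ ∈ ℂ, and let R₁, R₂, S₁, S₂, B ∈ B(H) be bounded operators satisfying S₁² = R₁, S₂² = R₂, and the first resolvent equation R₁ − R₂ = (z₁ − z₂) R₁ R₂. Define A₁ := −S₁ B S₁ and A₂ := −S₂ B S₂, and assume that I − A₁ and I − A₂ are boundedly invertible in B(H). Then the operators 𝑅₁ := S₁ (I − A₁)⁻¹ S₁ and 𝑅₂ := S₂ (I − A₂)⁻¹ S₂ satisfy the first resolvent equation 𝑅₁ − 𝑅₂ = (z₁ − z₂) 𝑅₁ 𝑅₂. -/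
/-- If `1 - x * y` is a unit in a ring, so is `1 - y * x`. -/
lemma isUnit_one_sub_swap {A : Type*} [Ring A] (x y : A)
    (h : IsUnit (1 - x * y)) : IsUnit (1 - y * x) := by
  refine ⟨⟨1 - y * x, 1 + y * h.unit.inv * x, ?_, ?_⟩, rfl⟩
  · calc
      (1 - y * x) * (1 + y * (IsUnit.unit h).inv * x) =
          1 - y * x + y * ((1 - x * y) * h.unit.inv) * x := by noncomm_ring
      _ = 1 := by simp
  · calc
      (1 + y * (IsUnit.unit h).inv * x) * (1 - y * x) =
          1 - y * x + y * (h.unit.inv * (1 - x * y)) * x := by noncomm_ring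
      _ = 1 := by simp

/-- The first resolvent identity for the operators defined by Tiktopoulos's formula.
If `S₁² = R₁`, `S₂² = R₂`, `R₁ - R₂ = (z₁ - z₂) R₁ R₂`, and `I - A₁`, `I - A₂` with
`Aᵢ = -Sᵢ B Sᵢ` are boundedly invertible, then `𝑅ᵢ := Sᵢ (I - Aᵢ)⁻¹ Sᵢ` satisfy
`𝑅₁ - 𝑅₂ = (z₁ - z₂) 𝑅₁ 𝑅₂`. -/
theorem tiktopoulos_first_resolvent_identity
    {H : Type*} [NormedAddCommGroup H] [InnerProductSpace ℂ H] [CompleteSpace H]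
    (z₁ z₂ : ℂ) (R₁ R₂ S₁ S₂ B A₁ A₂ : H →L[ℂ] H)
    (hS₁ : S₁ ^ 2 = R₁) (hS₂ : S₂ ^ 2 = R₂)
    (hres : R₁ - R₂ = (z₁ - z₂) • (R₁ * R₂))
    (hA₁ : A₁ = -(S₁ * B * S₁)) (hA₂ : A₂ = -(S₂ * B * S₂))
    (h₁ : IsUnit (1 - A₁)) (h₂ : IsUnit (1 - A₂)) :
    S₁ * Ring.inverse (1 - A₁) * S₁ - S₂ * Ring.inverse (1 - A₂) * S₂
      = (z₁ - z₂) •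
        ((S₁ * Ring.inverse (1 - A₁) * S₁) * (S₂ * Ring.inverse (1 - A₂) * S₂)) := by
  subst hA₁ hA₂
  -- `E₁ = 1 + R₁ B` is a unit since `1 - A₁ = 1 - (S₁ B) S₁ · (-1)` is
  have hE₁ : IsUnit (1 + R₁ * B) := by
    have := isUnit_one_sub_swap (-(S₁ * B)) S₁ (by
      simpa [mul_assoc, sub_neg_eq_add] using h₁)
    rw [← hS₁]
    simpa [sq, mul_assoc, sub_neg_eq_add] using this
  have hD₂ : IsUnit (1 + B * R₂) := by
    have := isUnit_one_sub_swap S₂ (-(B * S₂)) (by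
      simpa [mul_assoc, sub_neg_eq_add] using h₂)
    rw [← hS₂]
    simpa [sq, mul_assoc, sub_neg_eq_add] using this
  set C₁ : H →L[ℂ] H := 1 - -(S₁ * B * S₁) with hC₁
  set C₂ : H →L[ℂ] H := 1 - -(S₂ * B * S₂) with hC₂
  set E₁ : H →L[ℂ] H := 1 + R₁ * B with hE₁def
  set D₂ : H →L[ℂ] H := 1 + B * R₂ with hD₂def
  -- intertwining: S₁ C₁ = E₁ S₁ and C₂ S₂ = S₂ D₂
  have hint₁ : S₁ * C₁ = E₁ * S₁ := by
    rw [hC₁, hE₁def, ← hS₁]; noncomm_ring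
  have hint₂ : C₂ * S₂ = S₂ * D₂ := by
    rw [hC₂, hD₂def, ← hS₂]; noncomm_ring
  -- hence S₁ (C₁)⁻¹ = (E₁)⁻¹ S₁ and (C₂)⁻¹ S₂ = S₂ (D₂)⁻¹
  have key₁ : S₁ * Ring.inverse C₁ = Ring.inverse E₁ * S₁ := by
    have h : S₁ = E₁ * (S₁ * Ring.inverse C₁) := by
      rw [← mul_assoc, ← hint₁, mul_assoc, Ring.mul_inverse_cancel _ h₁, mul_one]
    calc S₁ * Ring.inverse C₁ = Ring.inverse E₁ * E₁ * (S₁ * Ring.inverse C₁) := by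
          rw [Ring.inverse_mul_cancel _ hE₁, one_mul]
      _ = Ring.inverse E₁ * S₁ := by rw [mul_assoc, ← h]
  have key₂ : Ring.inverse C₂ * S₂ = S₂ * Ring.inverse D₂ := by
    have h : S₂ = Ring.inverse C₂ * S₂ * D₂ := by
      rw [mul_assoc, ← hint₂, ← mul_assoc, Ring.inverse_mul_cancel _ h₂, one_mul]
    calc Ring.inverse C₂ * S₂ = Ring.inverse C₂ * S₂ * (D₂ * Ring.inverse D₂) := by
          rw [Ring.mul_inverse_cancel _ hD₂, mul_one]
      _ = S₂ * Ring.inverse D₂ := by rw [← mul_assoc, ← h]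
  have hR1 : S₁ * Ring.inverse C₁ * S₁ = Ring.inverse E₁ * R₁ := by
    rw [key₁, ← hS₁]; rw [sq, mul_assoc]
  have hR2 : S₂ * Ring.inverse C₂ * S₂ = R₂ * Ring.inverse D₂ := by
    have : S₂ * (Ring.inverse C₂ * S₂) = S₂ * (S₂ * Ring.inverse D₂) := by rw [key₂]
    rw [mul_assoc, this, ← hS₂, sq, mul_assoc]
  rw [hR1, hR2]
  -- reduce to the classical resolvent identity by sandwiching with E₁ and D₂
  have main : E₁ * (Ring.inverse E₁ * R₁ - R₂ * Ring.inverse D₂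
      - (z₁ - z₂) • (Ring.inverse E₁ * R₁ * (R₂ * Ring.inverse D₂))) * D₂ = 0 := by
    have e1 : E₁ * (Ring.inverse E₁ * R₁) = R₁ := by
      rw [← mul_assoc, Ring.mul_inverse_cancel _ hE₁, one_mul]
    have e2 : R₂ * Ring.inverse D₂ * D₂ = R₂ := by
      rw [mul_assoc, Ring.inverse_mul_cancel _ hD₂, mul_one]
    rw [mul_sub, sub_mul, mul_sub, sub_mul, mul_smul_comm, smul_mul_assoc, e1]
    have e3 : E₁ * (Ring.inverse E₁ * R₁ * (R₂ * Ring.inverse D₂)) * D₂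
        = R₁ * R₂ := by
      rw [← mul_assoc, ← mul_assoc, e1, mul_assoc, mul_assoc,
        Ring.inverse_mul_cancel _ hD₂, mul_one]
    rw [e3, mul_assoc, e2]
    rw [hE₁def, hD₂def]
    have : (R₁ * (1 + B * R₂) - (1 + R₁ * B) * R₂) = R₁ - R₂ := by noncomm_ring
    rw [mul_add, mul_one, add_mul, one_mul]
    calc R₁ + R₁ * (B * R₂) - (R₂ + R₁ * B * R₂) - (z₁ - z₂) • (R₁ * R₂)
        = (R₁ - R₂) - (z₁ - z₂) • (R₁ * R₂) := by noncomm_ring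
      _ = 0 := by rw [hres, sub_self]
  have := congrArg (fun Y => Ring.inverse E₁ * Y * Ring.inverse D₂) main
  simp only [mul_zero, zero_mul] at this
  rw [show ∀ X : H →L[ℂ] H, E₁ * X * D₂ = E₁ * (X * D₂) from fun X => mul_assoc _ _ _,
    ← mul_assoc (Ring.inverse E₁), Ring.inverse_mul_cancel _ hE₁, one_mul,
    mul_assoc, Ring.mul_inverse_cancel _ hD₂, mul_one] at this
  exact sub_eq_zero.mp this
end

section
/- Let κ ∈ (0, ∞) and let W : ℝ → ℂ be measurable. Then (1/(2π)) · ∫_ℝ ∫_ℝ |W(ξ − ξ')|² / ( (ξ² + κ²) · ((ξ')² + κ²) ) dξ' dξ = (1/κ) · ∫_ℝ |W(η)|² / (η² + 4κ²) dη, where both sides are Lebesgue integrals of nonnegative measurable functions with values in [0, ∞]. -/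
open MeasureTheory

open Set Filter Real Topology


noncomputable def Faux (a η x : ℝ) : ℝ :=
  (1/(η^2+4*a^2)) * ((1/η) * (Real.log (x^2+a^2) - Real.log ((x-η)^2+a^2))
    + (1/a) * (Real.arctan (x/a) + Real.arctan ((x-η)/a)))

lemma Faux_hasDerivAt (a η : ℝ) (ha : 0 < a) (hη : η ≠ 0) (x : ℝ) :
    HasDerivAt (Faux a η) (((x^2+a^2) * ((x-η)^2+a^2))⁻¹) x := by
  have h1 : (0:ℝ) < x^2+a^2 := by positivity
  have h2 : (0:ℝ) < (x-η)^2+a^2 := by positivity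
  have d1 : HasDerivAt (fun x : ℝ => x^2+a^2) (2*x) x := by
    simpa using ((hasDerivAt_pow 2 x).add_const (a^2))
  have d2 : HasDerivAt (fun x : ℝ => (x-η)^2+a^2) (2*(x-η)) x := by
    have := (((hasDerivAt_id x).sub_const η).pow 2).add_const (a^2)
    simpa using this
  have l1 := d1.log h1.ne'
  have l2 := d2.log h2.ne'
  have a1 : HasDerivAt (fun x : ℝ => Real.arctan (x/a))
      (1/(1+(x/a)^2) * (1/a)) x := ((hasDerivAt_id x).div_const a).arctan
  have a2 : HasDerivAt (fun x : ℝ => Real.arctan ((x-η)/a))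
      (1/(1+((x-η)/a)^2) * (1/a)) x :=
    (((hasDerivAt_id x).sub_const η).div_const a).arctan
  have := (((l1.sub l2).const_mul (1/η)).add ((a1.add a2).const_mul (1/a))).const_mul
      (1/(η^2+4*a^2))
  refine this.congr_deriv ?_
  have hd : (0:ℝ) < η^2+4*a^2 := by positivity
  field_simp
  ring


lemma Faux_tendsto (a η : ℝ) (ha : 0 < a) :
    Tendsto (Faux a η) atTop (𝓝 (π/(a*(η^2+4*a^2)))) := by
  have hlog : Tendsto (fun x : ℝ => Real.log (x^2+a^2) - Real.log ((x-η)^2+a^2))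
      atTop (𝓝 0) := by
    have hratio : Tendsto (fun x : ℝ => (x^2+a^2)/((x-η)^2+a^2)) atTop (𝓝 1) := by
      have hsq : Tendsto (fun x : ℝ => x^2) atTop atTop :=
        tendsto_pow_atTop two_ne_zero
      have h0 : Tendsto (fun x : ℝ => a^2/x^2) atTop (𝓝 0) :=
        tendsto_const_nhds.div_atTop hsq
      have h0' : Tendsto (fun x : ℝ => η/x) atTop (𝓝 0) :=
        tendsto_const_nhds.div_atTop tendsto_id
      have hnum : Tendsto (fun x : ℝ => 1 + a^2/x^2) atTop (𝓝 1) := by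
        simpa using tendsto_const_nhds.add h0
      have hden : Tendsto (fun x : ℝ => (1-η/x)^2 + a^2/x^2) atTop (𝓝 1) := by
        have : Tendsto (fun x : ℝ => (1-η/x)^2) atTop (𝓝 1) := by
          have := ((tendsto_const_nhds.sub h0').pow 2 : Tendsto (fun x : ℝ => ((1:ℝ)-η/x)^2) atTop (𝓝 ((1-0)^2)))
          simpa using this
        simpa using this.add h0
      have := hnum.div hden one_ne_zero
      rw [div_one] at this
      refine this.congr' ?_
      filter_upwards [eventually_gt_atTop (0:ℝ)] with x hx
      have hx2 : x ≠ 0 := hx.ne'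
      have h2 : (0:ℝ) < (x-η)^2+a^2 := by positivity
      simp only [Pi.div_apply]
      field_simp
    have hcont : Tendsto Real.log (𝓝 (1:ℝ)) (𝓝 0) := by
      simpa using (Real.continuousAt_log one_ne_zero).tendsto
    have := hcont.comp hratio
    refine this.congr fun x => ?_
    have h1 : (0:ℝ) < x^2+a^2 := by positivity
    have h2 : (0:ℝ) < (x-η)^2+a^2 := by positivity
    simp [Function.comp, Real.log_div h1.ne' h2.ne']
  have harct1 : Tendsto (fun x : ℝ => Real.arctan (x/a)) atTop (𝓝 (π/2)) := by
    exact (tendsto_nhds_of_tendsto_nhdsWithin tendsto_arctan_atTop).comp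
      (tendsto_id.atTop_div_const ha)
  have harct2 : Tendsto (fun x : ℝ => Real.arctan ((x-η)/a)) atTop (𝓝 (π/2)) := by
    exact (tendsto_nhds_of_tendsto_nhdsWithin tendsto_arctan_atTop).comp
      ((tendsto_atTop_add_const_right _ (-η) tendsto_id).atTop_div_const ha)
  have hfull := (((hlog.const_mul (1/η)).add ((harct1.add harct2).const_mul (1/a))).const_mul
      (1/(η^2+4*a^2)))
  have heq : (1/(η^2+4*a^2)) * ((1/η) * 0 + (1/a)*(π/2+π/2)) = π/(a*(η^2+4*a^2)) := by
    have hd : (0:ℝ) < η^2+4*a^2 := by positivity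
    field_simp
    ring
  rw [heq] at hfull
  exact hfull


lemma gconv_nonneg (a η x : ℝ) : 0 ≤ ((x^2+a^2) * ((x-η)^2+a^2))⁻¹ := by positivity

lemma integrableOn_Ioi_gconv (a η : ℝ) (ha : 0 < a) (hη : η ≠ 0) :
    IntegrableOn (fun x : ℝ => ((x^2+a^2) * ((x-η)^2+a^2))⁻¹) (Ioi 0) :=
  integrableOn_Ioi_deriv_of_nonneg' (fun x _ => Faux_hasDerivAt a η ha hη x)
    (fun x _ => gconv_nonneg a η x) (Faux_tendsto a η ha)

lemma integral_Ioi_gconv (a η : ℝ) (ha : 0 < a) (hη : η ≠ 0) :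
    ∫ x in Ioi (0:ℝ), ((x^2+a^2) * ((x-η)^2+a^2))⁻¹
      = π/(a*(η^2+4*a^2)) - Faux a η 0 :=
  integral_Ioi_of_hasDerivAt_of_nonneg' (fun x _ => Faux_hasDerivAt a η ha hη x)
    (fun x _ => gconv_nonneg a η x) (Faux_tendsto a η ha)

lemma gconv_neg_eq (a η x : ℝ) :
    (((-x)^2+a^2) * (((-x)-η)^2+a^2))⁻¹ = ((x^2+a^2) * ((x-(-η))^2+a^2))⁻¹ := by
  ring_nf

lemma integrableOn_Iic_gconv (a η : ℝ) (ha : 0 < a) (hη : η ≠ 0) :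
    IntegrableOn (fun x : ℝ => ((x^2+a^2) * ((x-η)^2+a^2))⁻¹) (Iic 0) := by
  have hIci : IntegrableOn (fun x : ℝ => ((x^2+a^2) * ((x-(-η))^2+a^2))⁻¹) (Ici 0) := by
    rw [integrableOn_Ici_iff_integrableOn_Ioi]
    exact integrableOn_Ioi_gconv a (-η) ha (neg_ne_zero.mpr hη)
  have key := (MeasurePreserving.integrableOn_comp_preimage
      (Measure.measurePreserving_neg (volume : Measure ℝ))
      (Homeomorph.neg ℝ).measurableEmbedding
      (f := fun x : ℝ => ((x^2+a^2) * ((x-η)^2+a^2))⁻¹) (s := Iic 0))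
  rw [← key]
  have : (fun x : ℝ => x)⁻¹' (Iic (0:ℝ)) = Iic 0 := rfl
  have hpre : (Neg.neg : ℝ → ℝ) ⁻¹' (Iic 0) = Ici 0 := by
    ext x; simp
  rw [hpre]
  refine hIci.congr_fun (fun x _ => ?_) measurableSet_Ici
  simp only [Function.comp]
  rw [← gconv_neg_eq]

lemma integrable_gconv (a η : ℝ) (ha : 0 < a) (hη : η ≠ 0) :
    Integrable (fun x : ℝ => ((x^2+a^2) * ((x-η)^2+a^2))⁻¹) := by
  rw [← integrableOn_univ, ← Set.Iic_union_Ioi (a := (0:ℝ))]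
  exact (integrableOn_Iic_gconv a η ha hη).union (integrableOn_Ioi_gconv a η ha hη)

lemma Faux_neg_zero (a η : ℝ) (hη : η ≠ 0) : Faux a (-η) 0 = - Faux a η 0 := by
  have h2 : ((0:ℝ) - -η) = η := by ring
  have h3 : ((0:ℝ) - η)^2 = η^2 := by ring
  simp only [Faux, h2, h3, neg_sq, zero_div, Real.arctan_zero, Real.arctan_neg,
    zero_sub, neg_div, div_neg, ne_eq, zero_pow, OfNat.ofNat_ne_zero,
    not_false_eq_true, zero_add]
  ring

lemma integral_gconv (a η : ℝ) (ha : 0 < a) (hη : η ≠ 0) :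
    ∫ x : ℝ, ((x^2+a^2) * ((x-η)^2+a^2))⁻¹ = 2*π/(a*(η^2+4*a^2)) := by
  rw [← intervalIntegral.integral_Iic_add_Ioi (integrableOn_Iic_gconv a η ha hη)
    (integrableOn_Ioi_gconv a η ha hη)]
  have hIic : ∫ x in Iic (0:ℝ), ((x^2+a^2) * ((x-η)^2+a^2))⁻¹
      = π/(a*(η^2+4*a^2)) + Faux a η 0 := by
    have := integral_comp_neg_Ioi (0:ℝ) (fun x : ℝ => ((x^2+a^2) * ((x-η)^2+a^2))⁻¹)
    rw [neg_zero] at this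
    rw [← this]
    have : ∫ x in Ioi (0:ℝ), (((-x)^2+a^2) * (((-x)-η)^2+a^2))⁻¹
        = ∫ x in Ioi (0:ℝ), ((x^2+a^2) * ((x-(-η))^2+a^2))⁻¹ := by
      refine setIntegral_congr_fun measurableSet_Ioi (fun x _ => ?_)
      exact gconv_neg_eq a η x
    rw [this, integral_Ioi_gconv a (-η) ha (neg_ne_zero.mpr hη),
      Faux_neg_zero a η hη]
    ring_nf
  rw [hIic, integral_Ioi_gconv a η ha hη]
  ring


/-- For `κ > 0` and measurable `W : ℝ → ℂ`,
`(1/(2π)) ∬ |W(ξ - ξ')|² / ((ξ² + κ²)((ξ')² + κ²)) dξ' dξ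
  = (1/κ) ∫ |W(η)|² / (η² + 4κ²) dη`,
as an identity of Lebesgue integrals of nonnegative measurable functions with values in
`[0, ∞]`. -/
theorem hilbertSchmidt_norm_identity_fourier (κ : ℝ) (hκ : 0 < κ)
    (W : ℝ → ℂ) (hW : Measurable W) :
    ENNReal.ofReal (1 / (2 * Real.pi)) *
      ∫⁻ ξ : ℝ, ∫⁻ ξ' : ℝ,
        ENNReal.ofReal (‖W (ξ - ξ')‖ ^ 2 / ((ξ ^ 2 + κ ^ 2) * (ξ' ^ 2 + κ ^ 2)))
      = ENNReal.ofReal (1 / κ) *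
        ∫⁻ η : ℝ, ENNReal.ofReal (‖W η‖ ^ 2 / (η ^ 2 + 4 * κ ^ 2)) := by
  -- Step 1: substitution ξ' = ξ - η in the inner integral
  have hmW : Measurable fun x : ℝ => ‖W x‖ ^ 2 := (hW.norm.pow_const 2)
  have step1 : ∀ ξ : ℝ,
      (∫⁻ ξ' : ℝ, ENNReal.ofReal (‖W (ξ - ξ')‖ ^ 2 / ((ξ ^ 2 + κ ^ 2) * (ξ' ^ 2 + κ ^ 2))))
        = ∫⁻ η : ℝ, ENNReal.ofReal (‖W η‖ ^ 2 / ((ξ ^ 2 + κ ^ 2) * ((ξ - η) ^ 2 + κ ^ 2))) := by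
    intro ξ
    have mp : MeasurePreserving (fun η : ℝ => ξ - η) volume volume := by
      have := (measurePreserving_add_left (volume : Measure ℝ) ξ).comp
        (Measure.measurePreserving_neg (volume : Measure ℝ))
      simpa [Function.comp_def, sub_eq_add_neg] using this
    have hf : Measurable fun ξ' : ℝ =>
        ENNReal.ofReal (‖W (ξ - ξ')‖ ^ 2 / ((ξ ^ 2 + κ ^ 2) * (ξ' ^ 2 + κ ^ 2))) := by
      apply Measurable.ennreal_ofReal
      exact ((hW.comp (measurable_const.sub measurable_id)).norm.pow_const 2).div
        (measurable_const.mul ((measurable_id.pow_const 2).add_const (κ^2)))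
    have := mp.lintegral_comp hf
    rw [← this]
    refine lintegral_congr fun η => ?_
    simp
  simp_rw [step1]
  -- Step 2: Tonelli
  have hprod : Measurable fun p : ℝ × ℝ =>
      ENNReal.ofReal (‖W p.2‖ ^ 2 / ((p.1 ^ 2 + κ ^ 2) * ((p.1 - p.2) ^ 2 + κ ^ 2))) := by
    apply Measurable.ennreal_ofReal
    exact ((hW.comp measurable_snd).norm.pow_const 2).div
      ((((measurable_fst.pow_const 2).add_const (κ^2))).mul
        (((measurable_fst.sub measurable_snd).pow_const 2).add_const (κ^2)))
  rw [lintegral_lintegral_swap hprod.aemeasurable]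
  -- Step 3: compute the inner integral for a.e. η
  have h0 : ∀ᵐ η : ℝ, η ≠ (0:ℝ) := by
    rw [ae_iff]
    simp only [not_not, Set.setOf_eq_eq_singleton]
    exact Real.volume_singleton
  have step3 : (∫⁻ η : ℝ, ∫⁻ ξ : ℝ,
        ENNReal.ofReal (‖W η‖ ^ 2 / ((ξ ^ 2 + κ ^ 2) * ((ξ - η) ^ 2 + κ ^ 2))))
      = ∫⁻ η : ℝ, ENNReal.ofReal (2*π/κ) *
          ENNReal.ofReal (‖W η‖ ^ 2 / (η ^ 2 + 4 * κ ^ 2)) := by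
    refine lintegral_congr_ae ?_
    filter_upwards [h0] with η hη
    have inner : (∫⁻ ξ : ℝ,
        ENNReal.ofReal (‖W η‖ ^ 2 / ((ξ ^ 2 + κ ^ 2) * ((ξ - η) ^ 2 + κ ^ 2))))
        = ENNReal.ofReal (‖W η‖ ^ 2) *
          ∫⁻ ξ : ℝ, ENNReal.ofReal (((ξ ^ 2 + κ ^ 2) * ((ξ - η) ^ 2 + κ ^ 2))⁻¹) := by
      rw [← lintegral_const_mul' _ _ ENNReal.ofReal_ne_top]
      refine lintegral_congr fun ξ => ?_
      rw [← ENNReal.ofReal_mul (by positivity), div_eq_mul_inv]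
    have hval : (∫⁻ ξ : ℝ, ENNReal.ofReal (((ξ ^ 2 + κ ^ 2) * ((ξ - η) ^ 2 + κ ^ 2))⁻¹))
        = ENNReal.ofReal (2*π/(κ*(η^2+4*κ^2))) := by
      rw [← ofReal_integral_eq_lintegral_ofReal (integrable_gconv κ η hκ hη)
        (Eventually.of_forall fun x => by positivity)]
      rw [integral_gconv κ η hκ hη]
    rw [inner, hval, ← ENNReal.ofReal_mul (by positivity), ← ENNReal.ofReal_mul (by positivity)]
    congr 1
    have h1 : (0:ℝ) < η^2+4*κ^2 := by positivity
    field_simp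
  rw [step3, lintegral_const_mul' _ _ ENNReal.ofReal_ne_top, ← mul_assoc,
    ← ENNReal.ofReal_mul (by positivity)]
  congr 2
  have hπ := Real.pi_pos
  field_simp
end

section
/- Let φ, ψ : ℝ → ℂ be Schwartz functions. Then ∫_ℝ ( |φ(x)ψ(x)|² + |(φψ)'(x)|² ) dx ≤ 2 · ( ∫_ℝ ( |φ(x)|² + |φ'(x)|² ) dx ) · ( ∫_ℝ ( |ψ(x)|² + |ψ'(x)|² ) dx ); that is, ‖φψ‖_{H¹(ℝ)}² ≤ 2 ‖φ‖_{H¹(ℝ)}² ‖ψ‖_{H¹(ℝ)}². -/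
open MeasureTheory Real Filter

namespace H1A

lemma inner_bound (z w : ℂ) : |z.re * w.re + z.im * w.im| ≤ ‖z‖ * ‖w‖ := by
  have hz : ‖z‖ ^ 2 = z.re ^ 2 + z.im ^ 2 := by
    rw [Complex.sq_norm, Complex.normSq_apply]; ring
  have hw : ‖w‖ ^ 2 = w.re ^ 2 + w.im ^ 2 := by
    rw [Complex.sq_norm, Complex.normSq_apply]; ring
  have h1 : (z.re * w.re + z.im * w.im) ^ 2 ≤ (‖z‖ * ‖w‖) ^ 2 := by
    rw [mul_pow, hz, hw]; nlinarith [sq_nonneg (z.re * w.im - z.im * w.re)]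
  calc |z.re * w.re + z.im * w.im| = Real.sqrt ((z.re * w.re + z.im * w.im) ^ 2) :=
        (Real.sqrt_sq_eq_abs _).symm
    _ ≤ Real.sqrt ((‖z‖ * ‖w‖) ^ 2) := Real.sqrt_le_sqrt h1
    _ = ‖z‖ * ‖w‖ := Real.sqrt_sq (by positivity)

lemma bdd (f : SchwartzMap ℝ ℂ) (x : ℝ) : ‖f x‖ ≤ ‖f.toBoundedContinuousFunction‖ := by
  simpa using f.toBoundedContinuousFunction.norm_coe_le_norm x

lemma integrable_norm_mul (f g : SchwartzMap ℝ ℂ) :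
    Integrable (fun x => ‖f x‖ * ‖g x‖) := by
  refine ((f.integrable (μ := volume)).norm.const_mul ‖g.toBoundedContinuousFunction‖).mono'
    ((f.continuous.norm.mul g.continuous.norm).aestronglyMeasurable) ?_
  filter_upwards with x
  rw [Real.norm_of_nonneg (by positivity)]
  calc ‖f x‖ * ‖g x‖ ≤ ‖f x‖ * ‖g.toBoundedContinuousFunction‖ :=
        mul_le_mul_of_nonneg_left (bdd g x) (norm_nonneg _)
    _ = ‖g.toBoundedContinuousFunction‖ * ‖f x‖ := mul_comm _ _

lemma integrable_of_le₂ (f₁ g₁ f₂ g₂ : SchwartzMap ℝ ℂ) (c₁ c₂ : ℝ) {u : ℝ → ℝ}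
    (hu : Continuous u)
    (hb : ∀ x, |u x| ≤ c₁ * (‖f₁ x‖ * ‖g₁ x‖) + c₂ * (‖f₂ x‖ * ‖g₂ x‖)) :
    Integrable u := by
  refine (((integrable_norm_mul f₁ g₁).const_mul c₁).add
    ((integrable_norm_mul f₂ g₂).const_mul c₂)).mono' hu.aestronglyMeasurable ?_
  filter_upwards with x
  simpa [Real.norm_eq_abs] using hb x

lemma integrable_sq (f : SchwartzMap ℝ ℂ) : Integrable (fun x => ‖f x‖ ^ 2) := by
  simpa [pow_two] using integrable_norm_mul f f

lemma cauchy_schwarz (f g : SchwartzMap ℝ ℂ) :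
    ∫ x : ℝ, ‖f x‖ * ‖g x‖ ≤
      Real.sqrt (∫ x : ℝ, ‖f x‖ ^ 2) * Real.sqrt (∫ x : ℝ, ‖g x‖ ^ 2) := by
  have hpq : Real.HolderConjugate 2 2 := ⟨by norm_num, by norm_num, by norm_num⟩
  have hmf : MemLp (fun x => ‖f x‖) (ENNReal.ofReal 2) (volume : Measure ℝ) := by
    rw [show ENNReal.ofReal 2 = 2 by norm_num]
    exact (memLp_two_iff_integrable_sq f.continuous.norm.aestronglyMeasurable).2
      (integrable_sq f)
  have hmg : MemLp (fun x => ‖g x‖) (ENNReal.ofReal 2) (volume : Measure ℝ) := by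
    rw [show ENNReal.ofReal 2 = 2 by norm_num]
    exact (memLp_two_iff_integrable_sq g.continuous.norm.aestronglyMeasurable).2
      (integrable_sq g)
  have h := integral_mul_le_Lp_mul_Lq_of_nonneg hpq
    (Filter.Eventually.of_forall fun x => norm_nonneg (f x))
    (Filter.Eventually.of_forall fun x => norm_nonneg (g x)) hmf hmg
  have e1 : ∀ (h : SchwartzMap ℝ ℂ), (∫ x : ℝ, ‖h x‖ ^ (2:ℝ)) = ∫ x : ℝ, ‖h x‖ ^ 2 := by
    intro h; congr 1; funext x
    rw [show (2:ℝ) = ((2:ℕ):ℝ) by norm_num, Real.rpow_natCast]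
  rw [e1, e1] at h
  refine h.trans (le_of_eq ?_)
  rw [← Real.sqrt_eq_rpow, ← Real.sqrt_eq_rpow]


lemma deriv_eq (f : SchwartzMap ℝ ℂ) : deriv (⇑f) = ⇑(SchwartzMap.derivCLM ℝ ℂ f) :=
  funext fun t => (SchwartzMap.derivCLM_apply ℝ f t).symm

lemma integrable_norm_mul_deriv (f : SchwartzMap ℝ ℂ) :
    Integrable (fun x => ‖f x‖ * ‖deriv f x‖) := by
  have h := integrable_norm_mul f (SchwartzMap.derivCLM ℝ ℂ f)
  simp only [deriv_eq f]
  exact h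

lemma norm_sq_hasDerivAt (f : SchwartzMap ℝ ℂ) (t : ℝ) :
    HasDerivAt (fun s => ‖f s‖ ^ 2)
      (2 * ((f t).re * (deriv f t).re + (f t).im * (deriv f t).im)) t := by
  have hf : HasDerivAt f (deriv f t) t := f.differentiableAt.hasDerivAt
  have hre : HasDerivAt (fun s => (f s).re) ((deriv f t).re) t :=
    (Complex.reCLM.hasFDerivAt.comp_hasDerivAt t hf)
  have him : HasDerivAt (fun s => (f s).im) ((deriv f t).im) t :=
    (Complex.imCLM.hasFDerivAt.comp_hasDerivAt t hf)
  have H : HasDerivAt (fun s => (f s).re * (f s).re + (f s).im * (f s).im) _ t :=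
    (hre.mul hre).add (him.mul him)
  have heq : (fun s => (f s).re * (f s).re + (f s).im * (f s).im) = fun s => ‖f s‖ ^ 2 := by
    funext s
    rw [Complex.sq_norm, Complex.normSq_apply]
  rw [heq] at H
  convert H using 1
  ring

lemma sup_sq_le (f : SchwartzMap ℝ ℂ) (x : ℝ) :
    ‖f x‖ ^ 2 ≤ Real.sqrt (∫ y : ℝ, ‖f y‖ ^ 2) * Real.sqrt (∫ y : ℝ, ‖deriv f y‖ ^ 2) := by
  set gd : ℝ → ℝ := fun t => 2 * ((f t).re * (deriv f t).re + (f t).im * (deriv f t).im) with hgd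
  have hgd_cont : Continuous gd := by
    have h1 : Continuous (deriv f) := by rw [deriv_eq f]; exact (SchwartzMap.derivCLM ℝ ℂ f).continuous
    fun_prop
  have hgd_bound : ∀ t, |gd t| ≤ 2 * (‖f t‖ * ‖deriv f t‖) := by
    intro t
    rw [hgd]
    calc |2 * ((f t).re * (deriv f t).re + (f t).im * (deriv f t).im)|
        = 2 * |(f t).re * (deriv f t).re + (f t).im * (deriv f t).im| := by
          rw [abs_mul]; norm_num
      _ ≤ 2 * (‖f t‖ * ‖deriv f t‖) := by
          have := inner_bound (f t) (deriv f t); linarith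
  have hgd_int : Integrable gd := by
    refine ((integrable_norm_mul_deriv f).const_mul 2).mono' hgd_cont.aestronglyMeasurable ?_
    filter_upwards with t
    simpa [Real.norm_eq_abs] using hgd_bound t
  have habs_int : Integrable (fun t => |gd t|) := hgd_int.abs
  have htop : Tendsto (fun t => ‖f t‖ ^ 2) atTop (nhds 0) := by
    have h := (zero_at_infty f).norm.pow 2
    simp only [norm_zero] at h
    rw [show (0:ℝ)^2 = 0 by norm_num] at h
    exact h.mono_left _root_.atTop_le_cocompact
  have hbot : Tendsto (fun t => ‖f t‖ ^ 2) atBot (nhds 0) := by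
    have h := (zero_at_infty f).norm.pow 2
    simp only [norm_zero] at h
    rw [show (0:ℝ)^2 = 0 by norm_num] at h
    exact h.mono_left _root_.atBot_le_cocompact
  have hIic : ∫ t in Set.Iic x, gd t = ‖f x‖ ^ 2 - 0 :=
    integral_Iic_of_hasDerivAt_of_tendsto' (fun t _ => norm_sq_hasDerivAt f t)
      hgd_int.integrableOn hbot
  have hIoi : ∫ t in Set.Ioi x, gd t = 0 - ‖f x‖ ^ 2 :=
    integral_Ioi_of_hasDerivAt_of_tendsto' (fun t _ => norm_sq_hasDerivAt f t)
      hgd_int.integrableOn htop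
  have h1 : (∫ t in Set.Iic x, gd t) ≤ ∫ t in Set.Iic x, |gd t| :=
    setIntegral_mono hgd_int.integrableOn habs_int.integrableOn fun t => le_abs_self _
  have h2 : (∫ t in Set.Ioi x, (fun s => -gd s) t) ≤ ∫ t in Set.Ioi x, |gd t| :=
    setIntegral_mono hgd_int.neg.integrableOn habs_int.integrableOn fun t => neg_le_abs _
  have h2' : -(∫ t in Set.Ioi x, gd t) ≤ ∫ t in Set.Ioi x, |gd t| := by
    rw [← integral_neg]; exact h2
  have hsplit : (∫ t in Set.Iic x, |gd t|) + ∫ t in Set.Ioi x, |gd t| = ∫ t, |gd t| := by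
    rw [← Set.compl_Iic (a := x)]
    exact integral_add_compl measurableSet_Iic habs_int
  have h3 : (∫ t : ℝ, |gd t|) ≤ 2 * ∫ t : ℝ, ‖f t‖ * ‖deriv f t‖ := by
    rw [← MeasureTheory.integral_const_mul]
    exact integral_mono habs_int ((integrable_norm_mul_deriv f).const_mul 2) hgd_bound
  have h4 : (∫ t : ℝ, ‖f t‖ * ‖deriv f t‖) ≤
      Real.sqrt (∫ y : ℝ, ‖f y‖ ^ 2) * Real.sqrt (∫ y : ℝ, ‖deriv f y‖ ^ 2) := by
    have h := cauchy_schwarz f (SchwartzMap.derivCLM ℝ ℂ f)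
    simp only [deriv_eq f]
    simpa using h
  linarith


lemma integrable_sq_deriv (f : SchwartzMap ℝ ℂ) : Integrable (fun x => ‖deriv f x‖ ^ 2) := by
  have h := integrable_sq (SchwartzMap.derivCLM ℝ ℂ f)
  simp only [deriv_eq f]
  exact h

lemma pointwise_sq_bound (z w u v : ℂ) :
    ‖z * w + u * v‖ ^ 2 ≤ 2 * (‖z‖ ^ 2 * ‖w‖ ^ 2) + 2 * (‖u‖ ^ 2 * ‖v‖ ^ 2) := by
  have h1 : ‖z * w + u * v‖ ≤ ‖z‖ * ‖w‖ + ‖u‖ * ‖v‖ := by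
    calc ‖z * w + u * v‖ ≤ ‖z * w‖ + ‖u * v‖ := norm_add_le _ _
      _ = ‖z‖ * ‖w‖ + ‖u‖ * ‖v‖ := by rw [norm_mul, norm_mul]
  have h2 : ‖z * w + u * v‖ ^ 2 ≤ (‖z‖ * ‖w‖ + ‖u‖ * ‖v‖) ^ 2 :=
    pow_le_pow_left₀ (norm_nonneg _) h1 2
  nlinarith [sq_nonneg (‖z‖ * ‖w‖ - ‖u‖ * ‖v‖)]

end H1A

open H1A in
set_option maxHeartbeats 1000000 in
/-- The algebra property of the `H¹(ℝ)`-norm: for Schwartz functions `φ, ψ`,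
`‖φψ‖²_{H¹} ≤ 2 ‖φ‖²_{H¹} ‖ψ‖²_{H¹}`, where `‖φ‖²_{H¹} = ∫ (|φ|² + |φ'|²)`. -/
theorem h1_norm_algebra (φ ψ : SchwartzMap ℝ ℂ) :
    (∫ x : ℝ, (‖φ x * ψ x‖ ^ 2 + ‖deriv (fun t => φ t * ψ t) x‖ ^ 2))
      ≤ 2 * (∫ x : ℝ, (‖φ x‖ ^ 2 + ‖deriv (fun t => φ t) x‖ ^ 2)) *
          (∫ x : ℝ, (‖ψ x‖ ^ 2 + ‖deriv (fun t => ψ t) x‖ ^ 2)) := by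
  have hd : ∀ y : ℝ, deriv (fun t => φ t * ψ t) y = deriv (⇑φ) y * ψ y + φ y * deriv (⇑ψ) y :=
    fun y => deriv_mul φ.differentiableAt ψ.differentiableAt
  simp only [hd]
  set A := ∫ x : ℝ, ‖φ x‖ ^ 2 with hA
  set B := ∫ x : ℝ, ‖deriv (⇑φ) x‖ ^ 2 with hB
  set C := ∫ x : ℝ, ‖ψ x‖ ^ 2 with hC
  set D := ∫ x : ℝ, ‖deriv (⇑ψ) x‖ ^ 2 with hD
  have hA0 : 0 ≤ A := integral_nonneg fun x => by positivity
  have hB0 : 0 ≤ B := integral_nonneg fun x => by positivity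
  have hC0 : 0 ≤ C := integral_nonneg fun x => by positivity
  have hD0 : 0 ≤ D := integral_nonneg fun x => by positivity
  have hφc : Continuous (deriv (⇑φ)) := by
    rw [deriv_eq φ]; exact (SchwartzMap.derivCLM ℝ ℂ φ).continuous
  have hψc : Continuous (deriv (⇑ψ)) := by
    rw [deriv_eq ψ]; exact (SchwartzMap.derivCLM ℝ ℂ ψ).continuous
  -- integrability of the two parts
  have iprod : Integrable (fun x => ‖φ x * ψ x‖ ^ 2) := by
    refine integrable_of_le₂ φ ψ φ ψ
      (‖φ.toBoundedContinuousFunction‖ * ‖ψ.toBoundedContinuousFunction‖) 0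
      (by fun_prop) fun x => ?_
    rw [abs_of_nonneg (by positivity), norm_mul, mul_pow]
    have h1 := bdd φ x; have h2 := bdd ψ x
    have key : ‖φ x‖ * ‖ψ x‖ ≤ ‖φ.toBoundedContinuousFunction‖ * ‖ψ.toBoundedContinuousFunction‖ :=
      mul_le_mul h1 h2 (norm_nonneg _) ((norm_nonneg _).trans h1)
    calc ‖φ x‖ ^ 2 * ‖ψ x‖ ^ 2 = (‖φ x‖ * ‖ψ x‖) * (‖φ x‖ * ‖ψ x‖) := by ring
      _ ≤ (‖φ.toBoundedContinuousFunction‖ * ‖ψ.toBoundedContinuousFunction‖) *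
          (‖φ x‖ * ‖ψ x‖) := mul_le_mul_of_nonneg_right key (by positivity)
      _ = ‖φ.toBoundedContinuousFunction‖ * ‖ψ.toBoundedContinuousFunction‖ * (‖φ x‖ * ‖ψ x‖) +
          0 * (‖φ x‖ * ‖ψ x‖) := by ring
  have ider : Integrable (fun x => ‖deriv (⇑φ) x * ψ x + φ x * deriv (⇑ψ) x‖ ^ 2) := by
    refine integrable_of_le₂ (SchwartzMap.derivCLM ℝ ℂ φ) ψ φ (SchwartzMap.derivCLM ℝ ℂ ψ)
      (2 * (‖(SchwartzMap.derivCLM ℝ ℂ φ).toBoundedContinuousFunction‖ *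
        ‖ψ.toBoundedContinuousFunction‖))
      (2 * (‖φ.toBoundedContinuousFunction‖ *
        ‖(SchwartzMap.derivCLM ℝ ℂ ψ).toBoundedContinuousFunction‖))
      (by fun_prop) fun x => ?_
    rw [abs_of_nonneg (by positivity)]
    have hb := pointwise_sq_bound (deriv (⇑φ) x) (ψ x) (φ x) (deriv (⇑ψ) x)
    have e1 : ‖(SchwartzMap.derivCLM ℝ ℂ φ) x‖ = ‖deriv (⇑φ) x‖ := by
      rw [SchwartzMap.derivCLM_apply]
    have e2 : ‖(SchwartzMap.derivCLM ℝ ℂ ψ) x‖ = ‖deriv (⇑ψ) x‖ := by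
      rw [SchwartzMap.derivCLM_apply]
    rw [e1, e2]
    have b1 := bdd (SchwartzMap.derivCLM ℝ ℂ φ) x
    have b2 := bdd ψ x
    have b3 := bdd φ x
    have b4 := bdd (SchwartzMap.derivCLM ℝ ℂ ψ) x
    rw [SchwartzMap.derivCLM_apply] at b1
    rw [SchwartzMap.derivCLM_apply] at b4
    have key1 : ‖deriv (⇑φ) x‖ * ‖ψ x‖ ≤
        ‖(SchwartzMap.derivCLM ℝ ℂ φ).toBoundedContinuousFunction‖ * ‖ψ.toBoundedContinuousFunction‖ :=
      mul_le_mul b1 b2 (norm_nonneg _) ((norm_nonneg _).trans b1)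
    have key2 : ‖φ x‖ * ‖deriv (⇑ψ) x‖ ≤
        ‖φ.toBoundedContinuousFunction‖ * ‖(SchwartzMap.derivCLM ℝ ℂ ψ).toBoundedContinuousFunction‖ :=
      mul_le_mul b3 b4 (norm_nonneg _) ((norm_nonneg _).trans b3)
    have t1 : 2 * (‖deriv (⇑φ) x‖ ^ 2 * ‖ψ x‖ ^ 2) ≤
        2 * (‖(SchwartzMap.derivCLM ℝ ℂ φ).toBoundedContinuousFunction‖ *
          ‖ψ.toBoundedContinuousFunction‖) * (‖deriv (⇑φ) x‖ * ‖ψ x‖) := by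
      have := mul_le_mul_of_nonneg_right key1 (mul_nonneg (norm_nonneg (deriv (⇑φ) x)) (norm_nonneg (ψ x)))
      nlinarith
    have t2 : 2 * (‖φ x‖ ^ 2 * ‖deriv (⇑ψ) x‖ ^ 2) ≤
        2 * (‖φ.toBoundedContinuousFunction‖ *
          ‖(SchwartzMap.derivCLM ℝ ℂ ψ).toBoundedContinuousFunction‖) * (‖φ x‖ * ‖deriv (⇑ψ) x‖) := by
      have := mul_le_mul_of_nonneg_right key2 (mul_nonneg (norm_nonneg (φ x)) (norm_nonneg (deriv (⇑ψ) x)))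
      nlinarith
    linarith
  -- split the integrals
  have hsplitL : (∫ x : ℝ, (‖φ x * ψ x‖ ^ 2 + ‖deriv (⇑φ) x * ψ x + φ x * deriv (⇑ψ) x‖ ^ 2))
      = (∫ x : ℝ, ‖φ x * ψ x‖ ^ 2) +
        ∫ x : ℝ, ‖deriv (⇑φ) x * ψ x + φ x * deriv (⇑ψ) x‖ ^ 2 :=
    integral_add iprod ider
  have hsplitφ : (∫ x : ℝ, (‖φ x‖ ^ 2 + ‖deriv (⇑φ) x‖ ^ 2)) = A + B :=
    integral_add (integrable_sq φ) (integrable_sq_deriv φ)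
  have hsplitψ : (∫ x : ℝ, (‖ψ x‖ ^ 2 + ‖deriv (⇑ψ) x‖ ^ 2)) = C + D :=
    integral_add (integrable_sq ψ) (integrable_sq_deriv ψ)
  rw [hsplitL, hsplitφ, hsplitψ]
  -- main estimates
  have supφ : ∀ x : ℝ, ‖φ x‖ ^ 2 ≤ Real.sqrt A * Real.sqrt B := fun x => sup_sq_le φ x
  have supψ : ∀ x : ℝ, ‖ψ x‖ ^ 2 ≤ Real.sqrt C * Real.sqrt D := fun x => sup_sq_le ψ x
  have E1 : (∫ x : ℝ, ‖φ x * ψ x‖ ^ 2) ≤ (Real.sqrt A * Real.sqrt B) * C := by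
    have := integral_mono iprod ((integrable_sq ψ).const_mul (Real.sqrt A * Real.sqrt B))
      (fun x => by
        rw [norm_mul, mul_pow]
        exact mul_le_mul_of_nonneg_right (supφ x) (sq_nonneg _))
    rwa [MeasureTheory.integral_const_mul] at this
  have E2 : (∫ x : ℝ, ‖deriv (⇑φ) x * ψ x + φ x * deriv (⇑ψ) x‖ ^ 2)
      ≤ 2 * (Real.sqrt C * Real.sqrt D) * B + 2 * (Real.sqrt A * Real.sqrt B) * D := by
    have hmono := integral_mono ider
      (((integrable_sq_deriv φ).const_mul (2 * (Real.sqrt C * Real.sqrt D))).add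
        ((integrable_sq_deriv ψ).const_mul (2 * (Real.sqrt A * Real.sqrt B))))
      (fun x => by
        have hb := pointwise_sq_bound (deriv (⇑φ) x) (ψ x) (φ x) (deriv (⇑ψ) x)
        have h1 : 2 * (‖deriv (⇑φ) x‖ ^ 2 * ‖ψ x‖ ^ 2)
            ≤ 2 * (Real.sqrt C * Real.sqrt D) * ‖deriv (⇑φ) x‖ ^ 2 := by
          have := mul_le_mul_of_nonneg_left (supψ x) (sq_nonneg (‖deriv (⇑φ) x‖))
          nlinarith
        have h2 : 2 * (‖φ x‖ ^ 2 * ‖deriv (⇑ψ) x‖ ^ 2)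
            ≤ 2 * (Real.sqrt A * Real.sqrt B) * ‖deriv (⇑ψ) x‖ ^ 2 := by
          have := mul_le_mul_of_nonneg_right (supφ x) (sq_nonneg (‖deriv (⇑ψ) x‖))
          nlinarith
        calc ‖deriv (⇑φ) x * ψ x + φ x * deriv (⇑ψ) x‖ ^ 2
            ≤ 2 * (‖deriv (⇑φ) x‖ ^ 2 * ‖ψ x‖ ^ 2) + 2 * (‖φ x‖ ^ 2 * ‖deriv (⇑ψ) x‖ ^ 2) := hb
          _ ≤ 2 * (Real.sqrt C * Real.sqrt D) * ‖deriv (⇑φ) x‖ ^ 2 +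
              2 * (Real.sqrt A * Real.sqrt B) * ‖deriv (⇑ψ) x‖ ^ 2 := add_le_add h1 h2)
    simp only [Pi.add_apply] at hmono
    rwa [integral_add ((integrable_sq_deriv φ).const_mul _) ((integrable_sq_deriv ψ).const_mul _),
      MeasureTheory.integral_const_mul, MeasureTheory.integral_const_mul] at hmono
  -- final algebra
  have ha : Real.sqrt A ^ 2 = A := Real.sq_sqrt hA0
  have hb : Real.sqrt B ^ 2 = B := Real.sq_sqrt hB0
  have hc : Real.sqrt C ^ 2 = C := Real.sq_sqrt hC0
  have hd' : Real.sqrt D ^ 2 = D := Real.sq_sqrt hD0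
  nlinarith [E1, E2, ha, hb, hc, hd',
    mul_nonneg (sq_nonneg (Real.sqrt A - Real.sqrt B)) (sq_nonneg (Real.sqrt C)),
    mul_nonneg (sq_nonneg (Real.sqrt C - Real.sqrt D)) (sq_nonneg (Real.sqrt B)),
    mul_nonneg (sq_nonneg (Real.sqrt A - Real.sqrt B)) (sq_nonneg (Real.sqrt D)),
    Real.sqrt_nonneg A, Real.sqrt_nonneg B, Real.sqrt_nonneg C, Real.sqrt_nonneg D]
end
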